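/- arXiv:1705.03335 — 2 statements merged into one kernel-verified Lean document; each statement's English description precedes it below -/
import Mathlib

section
/- Let d ≥ 1, let k ≥ 2 be an integer, and let ε ∈ (0, 1/√d). If F ⊆ ℝ^d satisfies dim_H F > d + log(1 − 1/k) / log(k·⌈√d/(2ε)⌉), then for every unit vector e ∈ S^{d−1}, the set F contains a (k,ε,{e})-AP; that is, F gets within distance εΔ of every point of some arithmetic progression t, t + Δe, …, t + (k−1)Δe (for some t ∈ ℝ^d and Δ > 0) in every direction e. -/
/-- A set `F ⊆ ℝ^d` contains a `(k, ε, {e})`-AP in the direction `e`: there exist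
`t ∈ ℝ^d` and `Δ > 0` such that every point `t + iΔe`, `i = 0, …, k-1`, is within
distance `εΔ` of some point of `F`. -/
def ContainsKAPdir {d : ℕ} (F : Set (EuclideanSpace ℝ (Fin d)))
    (k : ℕ) (ε : ℝ) (e : EuclideanSpace ℝ (Fin d)) : Prop :=
  ∃ (t : EuclideanSpace ℝ (Fin d)) (Δ : ℝ), 0 < Δ ∧
    ∀ i < k, ∃ y ∈ F, ‖t + ((i : ℝ) * Δ) • e - y‖ ≤ ε * Δ

open MeasureTheory Set Filter

noncomputable section AP13aux
open scoped Classical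
variable {d : ℕ}

/-- Half-open cube with side `s`, lower corner `x • s`. -/
def APcube (s : ℝ) (x : Fin d → ℤ) : Set (EuclideanSpace ℝ (Fin d)) :=
  {y | ∀ j, (x j : ℝ) * s ≤ y j ∧ y j < ((x j : ℝ) + 1) * s}

lemma mem_APcube {s : ℝ} (hs : 0 < s) {x : Fin d → ℤ} {y : EuclideanSpace ℝ (Fin d)} :
    y ∈ APcube s x ↔ ∀ j, ⌊y j / s⌋ = x j := by
  refine forall_congr' fun j => ?_
  rw [Int.floor_eq_iff]
  constructor
  · rintro ⟨h1, h2⟩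
    exact ⟨(le_div_iff₀ hs).2 (by linarith), (div_lt_iff₀ hs).2 (by linarith)⟩
  · rintro ⟨h1, h2⟩
    rw [le_div_iff₀ hs] at h1
    rw [div_lt_iff₀ hs] at h2
    constructor <;> push_cast at * <;> linarith

lemma diam_APcube_le {s : ℝ} (hs : 0 ≤ s) (x : Fin d → ℤ) :
    EMetric.diam (APcube s x) ≤ ENNReal.ofReal (Real.sqrt d * s) := by
  apply EMetric.diam_le
  intro y hy z hz
  rw [edist_dist]
  apply ENNReal.ofReal_le_ofReal
  rw [EuclideanSpace.dist_eq]
  have hcoord : ∀ j, dist (y j) (z j) ≤ s := by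
    intro j
    have h1 := hy j
    have h2 := hz j
    rw [Real.dist_eq, abs_le]
    constructor <;> linarith [h1.1, h1.2, h2.1, h2.2]
  calc Real.sqrt (∑ j, dist (y j) (z j) ^ 2)
      ≤ Real.sqrt (∑ _j : Fin d, s ^ 2) := by
        apply Real.sqrt_le_sqrt
        apply Finset.sum_le_sum
        intro j _
        exact pow_le_pow_left₀ dist_nonneg (hcoord j) 2
    _ = Real.sqrt (d * s ^ 2) := by
        rw [Finset.sum_const, Finset.card_univ, Fintype.card_fin, nsmul_eq_mul]
    _ = Real.sqrt d * s := by
        rw [Real.sqrt_mul (by positivity), Real.sqrt_sq hs]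

lemma norm_le_of_coords {v : EuclideanSpace ℝ (Fin d)} {c : ℝ} (hc : 0 ≤ c)
    (h : ∀ j, |v j| ≤ c) : ‖v‖ ≤ Real.sqrt d * c := by
  rw [EuclideanSpace.norm_eq]
  calc Real.sqrt (∑ j, ‖v j‖ ^ 2)
      ≤ Real.sqrt (∑ _j : Fin d, c ^ 2) := by
        apply Real.sqrt_le_sqrt
        apply Finset.sum_le_sum
        intro j _
        exact pow_le_pow_left₀ (norm_nonneg _) (h j) 2
    _ = Real.sqrt (d * c ^ 2) := by
        rw [Finset.sum_const, Finset.card_univ, Fintype.card_fin, nsmul_eq_mul]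
    _ = Real.sqrt d * c := by
        rw [Real.sqrt_mul (by positivity), Real.sqrt_sq hc]

def APchildren (M : ℕ) (x : Fin d → ℤ) : Finset (Fin d → ℤ) :=
  Fintype.piFinset (fun j => Finset.Ico (M * x j) (M * x j + M))

lemma child_step {M : ℕ} (hM : 2 ≤ M) {n : ℕ} {z : Fin d → ℤ} {y : EuclideanSpace ℝ (Fin d)}
    (hy : y ∈ APcube ((M : ℝ)⁻¹ ^ n) z) :
    (fun j => ⌊y j / (M : ℝ)⁻¹ ^ (n + 1)⌋) ∈ APchildren M z ∧
      y ∈ APcube ((M : ℝ)⁻¹ ^ (n + 1)) (fun j => ⌊y j / (M : ℝ)⁻¹ ^ (n + 1)⌋) := by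
  have hM0 : (0 : ℝ) < M := by positivity
  have hr : (0 : ℝ) < (M : ℝ)⁻¹ ^ n := by positivity
  have hr1 : (0 : ℝ) < (M : ℝ)⁻¹ ^ (n + 1) := by positivity
  constructor
  · rw [APchildren, Fintype.mem_piFinset]
    intro j
    set u : ℝ := y j / (M : ℝ)⁻¹ ^ n with hu
    have hu1 : (z j : ℝ) ≤ u := (le_div_iff₀ hr).2 (hy j).1
    have hu2 : u < (z j : ℝ) + 1 := (div_lt_iff₀ hr).2 (by linarith [(hy j).2])
    have key : y j / (M : ℝ)⁻¹ ^ (n + 1) = u * M := by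
      rw [hu, pow_succ]
      field_simp
    rw [Finset.mem_Ico]
    constructor
    · apply Int.le_floor.2
      rw [key]
      push_cast
      calc (M : ℝ) * z j = (z j : ℝ) * M := by ring
        _ ≤ u * M := mul_le_mul_of_nonneg_right hu1 hM0.le
    · apply Int.floor_lt.2
      rw [key]
      push_cast
      calc u * M < ((z j : ℝ) + 1) * M := mul_lt_mul_of_pos_right hu2 hM0
        _ = M * z j + M := by ring
  · rw [mem_APcube hr1]
    intro j
    rfl

lemma ap_of_chain (hd : 0 < d) {k N : ℕ} {ε : ℝ} (hε : 0 < ε)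
    (hN : Real.sqrt d ≤ 2 * ε * N) (hN0 : 0 < N)
    {F : Set (EuclideanSpace ℝ (Fin d))} {s : ℝ} (hs : 0 < s) (w : Fin d → ℤ)
    (h : ∀ i < k, (F ∩ APcube s (Function.update w ⟨0, hd⟩ (w ⟨0, hd⟩ + i * N))).Nonempty) :
    ContainsKAPdir F k ε (EuclideanSpace.single ⟨0, hd⟩ 1) := by
  set j0 : Fin d := ⟨0, hd⟩
  set t : EuclideanSpace ℝ (Fin d) := WithLp.toLp 2 fun j => ((w j : ℝ) + 1 / 2) * s with ht
  refine ⟨t, N * s, by positivity, fun i hi => ?_⟩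
  obtain ⟨y, hyF, hyc⟩ := h i hi
  refine ⟨y, hyF, ?_⟩
  set v : EuclideanSpace ℝ (Fin d) := t + ((i : ℝ) * (N * s)) • EuclideanSpace.single j0 1 - y with hv
  have key : ∀ j, |v j| ≤ s / 2 := by
    intro j
    by_cases hj : j = j0
    · rw [hj]
      have hcoord := hyc j0
      rw [Function.update_self] at hcoord
      have hvj : v j0 = ((w j0 : ℝ) + 1 / 2) * s + (i : ℝ) * (N * s) - y j0 := by
        simp only [hv, PiLp.add_apply, PiLp.sub_apply, PiLp.smul_apply,
          EuclideanSpace.single_apply, if_pos rfl, smul_eq_mul, ht, if_true, PiLp.toLp_apply]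
        ring
      rw [hvj, abs_le]
      push_cast at hcoord
      constructor <;> nlinarith [hcoord.1, hcoord.2]
    · have hcoord := hyc j
      rw [Function.update_of_ne hj] at hcoord
      have hvj : v j = ((w j : ℝ) + 1 / 2) * s - y j := by
        simp only [hv, PiLp.add_apply, PiLp.sub_apply, PiLp.smul_apply,
          EuclideanSpace.single_apply, if_neg hj, smul_eq_mul, ht, PiLp.toLp_apply]
        ring
      rw [hvj, abs_le]
      constructor <;> nlinarith [hcoord.1, hcoord.2]
  calc ‖v‖
      ≤ Real.sqrt d * (s / 2) := norm_le_of_coords (by positivity) key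
    _ ≤ 2 * ε * N * (s / 2) := by
        apply mul_le_mul_of_nonneg_right hN (by positivity)
    _ = ε * (N * s) := by ring

/-- In a column of `M = k*N` consecutive cubes, at most `M - N` of them meet `F`. -/
lemma column_count (hd : 0 < d) {k N M : ℕ} (hM : M = k * N) (hk : 2 ≤ k) (hN0 : 0 < N)
    {ε : ℝ} (hε : 0 < ε) (hN : Real.sqrt d ≤ 2 * ε * N)
    {F : Set (EuclideanSpace ℝ (Fin d))}
    (hnoAP : ¬ ContainsKAPdir F k ε (EuclideanSpace.single ⟨0, hd⟩ 1))
    {s : ℝ} (hs : 0 < s) (w : Fin d → ℤ) (b : ℤ) :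
    ((Finset.Ico b (b + M)).filter
      (fun a => (F ∩ APcube s (Function.update w ⟨0, hd⟩ a)).Nonempty)).card ≤ M - N := by
  set j0 : Fin d := ⟨0, hd⟩
  set P : ℤ → Prop := fun a => (F ∩ APcube s (Function.update w j0 a)).Nonempty with hP
  have hIco : (Finset.Ico b (b + M)).card = M := by
    rw [Int.card_Ico]
    simp
  -- for each q < N there is i < k with the cube at b + q + i*N missed
  have hmiss : ∀ q < N, ∃ i < k, ¬ P (b + q + i * N) := by
    intro q hq
    by_contra hcon
    push_neg at hcon
    apply hnoAP
    apply ap_of_chain hd hε hN hN0 hs (Function.update w j0 (b + q))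
    intro i hi
    have : Function.update (Function.update w j0 (b + q)) j0
        ((Function.update w j0 (b + q)) j0 + i * N) = Function.update w j0 (b + q + i * N) := by
      rw [Function.update_self, Function.update_idem]
    rw [this]
    exact hcon i hi
  -- choice of a missed cube for each q
  choose f hf1 hf2 using hmiss
  set g : ℕ → ℤ := fun q => if h : q < N then b + q + f q h * N else 0 with hg
  have hginj : Set.InjOn g (Finset.range N) := by
    intro q1 h1 q2 h2 hqe
    simp only [Finset.coe_range, Set.mem_Iio] at h1 h2
    rw [hg] at hqe
    simp only [dif_pos h1, dif_pos h2] at hqe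
    have e0 : ((q1 : ℤ) + (f q1 h1 : ℤ) * N) = (q2 : ℤ) + (f q2 h2 : ℤ) * N := by linarith
    have e1 := congrArg (fun z => z % (N : ℤ)) e0
    simp only [Int.add_mul_emod_self_right] at e1
    rw [Int.emod_eq_of_lt (Int.natCast_nonneg q1) (by exact_mod_cast h1),
      Int.emod_eq_of_lt (Int.natCast_nonneg q2) (by exact_mod_cast h2)] at e1
    exact_mod_cast e1
  have hgmem : ∀ q ∈ Finset.range N, g q ∈ (Finset.Ico b (b + M)).filter (fun a => ¬ P a) := by
    intro q hq
    rw [Finset.mem_range] at hq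
    rw [Finset.mem_filter, Finset.mem_Ico, hg]
    simp only [dif_pos hq]
    have hik := hf1 q hq
    have hnn : (0 : ℤ) ≤ (q : ℤ) + (f q hq : ℤ) * N := by positivity
    refine ⟨⟨by linarith, ?_⟩, hf2 q hq⟩
    have : (q : ℤ) + f q hq * N ≤ (N - 1 : ℤ) + (k - 1 : ℤ) * N := by
      have h1 : (q : ℤ) ≤ (N : ℤ) - 1 := by omega
      have h2 : (f q hq : ℤ) ≤ (k : ℤ) - 1 := by
        have := hf1 q hq; omega
      nlinarith [Int.natCast_nonneg N]
    have hMz : (M : ℤ) = k * N := by exact_mod_cast hM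
    nlinarith [this]
  have hNle : N ≤ ((Finset.Ico b (b + M)).filter (fun a => ¬ P a)).card := by
    calc N = (Finset.range N).card := (Finset.card_range N).symm
      _ ≤ _ := Finset.card_le_card_of_injOn g hgmem hginj
  have hsplit := Finset.card_filter_add_card_filter_not (s := Finset.Ico b (b + (M:ℤ)))
    (p := P)
  have key : (Finset.filter P (Finset.Ico b (b + (M:ℤ)))).card ≤ M - N := by omega
  exact key

/-- at most `(M-N) * M^(d-1)` of the `M^d` children of a cube meet `F`. -/
lemma hitchildren_count (hd : 0 < d) {k N M : ℕ} (hM : M = k * N) (hk : 2 ≤ k) (hN0 : 0 < N)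
    {ε : ℝ} (hε : 0 < ε) (hN : Real.sqrt d ≤ 2 * ε * N)
    {F : Set (EuclideanSpace ℝ (Fin d))}
    (hnoAP : ¬ ContainsKAPdir F k ε (EuclideanSpace.single ⟨0, hd⟩ 1))
    {s : ℝ} (hs : 0 < s) (x : Fin d → ℤ) :
    ((APchildren M x).filter (fun z => (F ∩ APcube s z).Nonempty)).card
      ≤ (M - N) * M ^ (d - 1) := by
  set j0 : Fin d := ⟨0, hd⟩
  set H := (APchildren M x).filter (fun z => (F ∩ APcube s z).Nonempty) with hH
  set π : (Fin d → ℤ) → (Fin d → ℤ) := fun z => Function.update z j0 0 with hπ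
  rw [Finset.card_eq_sum_card_image π H]
  have himg : (H.image π).card ≤ M ^ (d - 1) := by
    have hsub : H.image π ⊆ Fintype.piFinset
        (fun j => if j = j0 then ({0} : Finset ℤ) else Finset.Ico (M * x j) (M * x j + M)) := by
      intro w hw
      rw [Finset.mem_image] at hw
      obtain ⟨z, hz, rfl⟩ := hw
      rw [hH, Finset.mem_filter, APchildren, Fintype.mem_piFinset] at hz
      rw [Fintype.mem_piFinset]
      intro j
      by_cases hj : j = j0
      · subst hj
        simp [hπ]
      · simp only [hπ, Function.update_of_ne hj, if_neg hj]
        exact hz.1 j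
    calc (H.image π).card ≤ _ := Finset.card_le_card hsub
      _ = ∏ j : Fin d, (if j = j0 then ({0} : Finset ℤ)
            else Finset.Ico (M * x j) (M * x j + M)).card := Fintype.card_piFinset _
      _ = M ^ (d - 1) := by
          rw [← Finset.mul_prod_erase Finset.univ _ (Finset.mem_univ j0), if_pos rfl]
          simp only [Finset.card_singleton, one_mul]
          have hcards : ∀ j ∈ Finset.univ.erase j0, (if j = j0 then ({0} : Finset ℤ)
              else Finset.Ico (M * x j) (M * x j + M)).card = M := by
            intro j hj
            rw [if_neg (Finset.mem_erase.1 hj).1, Int.card_Ico]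
            simp
          rw [Finset.prod_congr rfl hcards, Finset.prod_const,
            Finset.card_erase_of_mem (Finset.mem_univ j0), Finset.card_univ, Fintype.card_fin]
  calc ∑ w ∈ H.image π, (H.filter (fun z => π z = w)).card
      ≤ ∑ _w ∈ H.image π, (M - N) := by
        apply Finset.sum_le_sum
        intro w hw
        -- fiber over w injects into the hit set of the column determined by w
        have hfib : (H.filter (fun z => π z = w)).card ≤
            ((Finset.Ico ((M : ℤ) * x j0) ((M : ℤ) * x j0 + M)).filter
              (fun a => (F ∩ APcube s (Function.update w j0 a)).Nonempty)).card := by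
          apply Finset.card_le_card_of_injOn (fun z => z j0)
          · intro z hz
            rw [Finset.mem_coe, Finset.mem_filter] at hz
            obtain ⟨hzH, hzw⟩ := hz
            rw [hH, Finset.mem_filter, APchildren, Fintype.mem_piFinset] at hzH
            have hzeq : Function.update w j0 (z j0) = z := by
              funext j
              by_cases hj : j = j0
              · subst hj; rw [Function.update_self]
              · have hzw' : Function.update z j0 0 = w := hzw
                rw [Function.update_of_ne hj, ← hzw', Function.update_of_ne hj]
            rw [Finset.mem_coe, Finset.mem_filter, hzeq]
            exact ⟨hzH.1 j0, hzH.2⟩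
          · intro z1 h1 z2 h2 he
            rw [Finset.mem_coe, Finset.mem_filter] at h1 h2
            funext j
            by_cases hj : j = j0
            · subst hj; exact he
            · have e1 : Function.update z1 j0 0 = w := h1.2
              have e2 : Function.update z2 j0 0 = w := h2.2
              calc z1 j = Function.update z1 j0 0 j := (Function.update_of_ne hj 0 z1).symm
                _ = Function.update z2 j0 0 j := by rw [e1, e2]
                _ = z2 j := Function.update_of_ne hj 0 z2
        exact hfib.trans (column_count hd hM hk hN0 hε hN hnoAP hs w ((M : ℤ) * x j0))
    _ = (H.image π).card * (M - N) := by rw [Finset.sum_const, smul_eq_mul]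
    _ ≤ M ^ (d - 1) * (M - N) := Nat.mul_le_mul_right _ himg
    _ = (M - N) * M ^ (d - 1) := Nat.mul_comm _ _

def APT (F : Set (EuclideanSpace ℝ (Fin d))) (M : ℕ) (x₀ : Fin d → ℤ) :
    ℕ → Finset (Fin d → ℤ)
  | 0 => {x₀}
  | n + 1 => (APT F M x₀ n).biUnion fun x =>
      (APchildren M x).filter fun z => (F ∩ APcube ((M : ℝ)⁻¹ ^ (n + 1)) z).Nonempty

lemma APT_card (hd : 0 < d) {k N M : ℕ} (hM : M = k * N) (hk : 2 ≤ k) (hN0 : 0 < N)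
    {ε : ℝ} (hε : 0 < ε) (hN : Real.sqrt d ≤ 2 * ε * N)
    {F : Set (EuclideanSpace ℝ (Fin d))}
    (hnoAP : ¬ ContainsKAPdir F k ε (EuclideanSpace.single ⟨0, hd⟩ 1))
    (x₀ : Fin d → ℤ) (n : ℕ) :
    (APT F M x₀ n).card ≤ ((M - N) * M ^ (d - 1)) ^ n := by
  induction n with
  | zero => simp [APT]
  | succ n ih =>
    have hM2 : 0 < M := by
      rw [hM]; positivity
    have hstep : ∀ x ∈ APT F M x₀ n,
        ((APchildren M x).filter
          (fun z => (F ∩ APcube ((M : ℝ)⁻¹ ^ (n + 1)) z).Nonempty)).card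
          ≤ (M - N) * M ^ (d - 1) := by
      intro x _
      exact hitchildren_count hd hM hk hN0 hε hN hnoAP (by positivity) x
    calc (APT F M x₀ (n + 1)).card
        ≤ (APT F M x₀ n).card * ((M - N) * M ^ (d - 1)) :=
          Finset.card_biUnion_le_card_mul _ _ _ hstep
      _ ≤ ((M - N) * M ^ (d - 1)) ^ n * ((M - N) * M ^ (d - 1)) :=
          Nat.mul_le_mul_right _ ih
      _ = ((M - N) * M ^ (d - 1)) ^ (n + 1) := (pow_succ _ _).symm

lemma APT_cover {M : ℕ} (hM : 2 ≤ M) {F : Set (EuclideanSpace ℝ (Fin d))}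
    (x₀ : Fin d → ℤ) (n : ℕ) {y : EuclideanSpace ℝ (Fin d)} (hyF : y ∈ F)
    (hy0 : y ∈ APcube 1 x₀) :
    ∃ z ∈ APT F M x₀ n, y ∈ APcube ((M : ℝ)⁻¹ ^ n) z := by
  induction n with
  | zero =>
    refine ⟨x₀, by simp [APT], ?_⟩
    rw [pow_zero]
    exact hy0
  | succ n ih =>
    obtain ⟨z, hz, hyz⟩ := ih
    obtain ⟨hchild, hycube⟩ := child_step hM hyz
    refine ⟨_, ?_, hycube⟩
    rw [APT, Finset.mem_biUnion]
    exact ⟨z, hz, Finset.mem_filter.2 ⟨hchild, ⟨y, hyF, hycube⟩⟩⟩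

lemma APmeasure_zero (hd : 0 < d) {k N M : ℕ} (hM : M = k * N) (hk : 2 ≤ k) (hN0 : 0 < N)
    {ε : ℝ} (hε : 0 < ε) (hN : Real.sqrt d ≤ 2 * ε * N)
    {F : Set (EuclideanSpace ℝ (Fin d))}
    (hnoAP : ¬ ContainsKAPdir F k ε (EuclideanSpace.single ⟨0, hd⟩ 1))
    {s' : ℝ} (hs'0 : 0 ≤ s')
    (hcond : (((M - N) * M ^ (d - 1) : ℕ) : ℝ) * ((M : ℝ)⁻¹) ^ s' < 1)
    (x₀ : Fin d → ℤ) : μH[s'] (F ∩ APcube 1 x₀) = 0 := by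
  have hM2 : 2 ≤ M := by
    calc 2 = 2 * 1 := (mul_one 2).symm
      _ ≤ k * N := Nat.mul_le_mul hk hN0
      _ = M := hM.symm
  have hMR : (1 : ℝ) < M := by exact_mod_cast hM2.trans_lt' one_lt_two
  set r : ℝ := (M : ℝ)⁻¹ with hr
  have hr0 : 0 < r := by rw [hr]; positivity
  have hr1 : r < 1 := by
    rw [hr, inv_lt_one_iff₀]; right; exact hMR
  set m : ℕ := (M - N) * M ^ (d - 1) with hm
  set ρ : ℝ := (m : ℝ) * r ^ s' with hρ
  have hρ0 : 0 ≤ ρ := by positivity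
  refine le_antisymm ?_ zero_le
  have hcover := MeasureTheory.Measure.hausdorffMeasure_le_liminf_sum (ι := fun n : ℕ => ↥(APT F M x₀ n)) (l := atTop) s'
    (F ∩ APcube 1 x₀) (fun n => ENNReal.ofReal (Real.sqrt d * r ^ n))
    ?_ (fun n z => APcube (r ^ n) (z : Fin d → ℤ)) ?_ ?_
  · refine hcover.trans ?_
    have hbound : ∀ n : ℕ, (∑ i : ↥(APT F M x₀ n), EMetric.diam
        (APcube (r ^ n) (i : Fin d → ℤ)) ^ s')
        ≤ ENNReal.ofReal (Real.sqrt d ^ s' * ρ ^ n) := by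
      intro n
      have h1 : ∀ i : ↥(APT F M x₀ n), EMetric.diam (APcube (r ^ n) (i : Fin d → ℤ)) ^ s'
          ≤ ENNReal.ofReal ((Real.sqrt d * r ^ n) ^ s') := by
        intro i
        rw [← ENNReal.ofReal_rpow_of_nonneg (by positivity) hs'0]
        exact ENNReal.rpow_le_rpow (diam_APcube_le (by positivity) _) hs'0
      calc (∑ i : ↥(APT F M x₀ n), EMetric.diam (APcube (r ^ n) (i : Fin d → ℤ)) ^ s')
          ≤ ∑ _i : ↥(APT F M x₀ n), ENNReal.ofReal ((Real.sqrt d * r ^ n) ^ s') :=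
            Finset.sum_le_sum (fun i _ => h1 i)
        _ = (Fintype.card ↥(APT F M x₀ n)) * ENNReal.ofReal ((Real.sqrt d * r ^ n) ^ s') := by
            rw [Finset.sum_const, Finset.card_univ, nsmul_eq_mul]
        _ ≤ (m ^ n : ℕ) * ENNReal.ofReal ((Real.sqrt d * r ^ n) ^ s') := by
            apply mul_le_mul_left
            have := APT_card hd hM hk hN0 hε hN hnoAP x₀ n
            rw [Fintype.card_coe]
            exact_mod_cast Nat.cast_le.2 (hm ▸ this)
        _ = ENNReal.ofReal ((m ^ n : ℕ) * (Real.sqrt d * r ^ n) ^ s') := by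
            rw [ENNReal.ofReal_mul (by positivity), ENNReal.ofReal_natCast]
        _ = ENNReal.ofReal (Real.sqrt d ^ s' * ρ ^ n) := by
            congr 1
            have hpow : (r ^ n) ^ s' = (r ^ s') ^ n := by
              rw [← Real.rpow_natCast r n, ← Real.rpow_natCast (r ^ s') n,
                ← Real.rpow_mul hr0.le, ← Real.rpow_mul hr0.le, mul_comm]
            rw [Real.mul_rpow (Real.sqrt_nonneg _) (by positivity), hρ, hm, mul_pow, hpow]
            push_cast [mul_pow, pow_mul]
            ring
    have htend : Tendsto (fun n : ℕ => ENNReal.ofReal (Real.sqrt d ^ s' * ρ ^ n))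
        atTop (nhds 0) := by
      rw [← ENNReal.ofReal_zero]
      apply ENNReal.tendsto_ofReal
      have : Tendsto (fun n : ℕ => ρ ^ n) atTop (nhds 0) :=
        tendsto_pow_atTop_nhds_zero_of_lt_one hρ0 hcond
      simpa using this.const_mul (Real.sqrt d ^ s')
    calc liminf (fun n => ∑ i : ↥(APT F M x₀ n),
          EMetric.diam (APcube (r ^ n) (i : Fin d → ℤ)) ^ s') atTop
        ≤ liminf (fun n : ℕ => ENNReal.ofReal (Real.sqrt d ^ s' * ρ ^ n)) atTop :=
          liminf_le_liminf (Eventually.of_forall hbound)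
      _ = 0 := htend.liminf_eq
  · -- tendsto of the diameter bound
    rw [← ENNReal.ofReal_zero]
    apply ENNReal.tendsto_ofReal
    have : Tendsto (fun n : ℕ => r ^ n) atTop (nhds 0) :=
      tendsto_pow_atTop_nhds_zero_of_lt_one hr0.le hr1
    simpa using this.const_mul (Real.sqrt d)
  · exact Eventually.of_forall fun n i => diam_APcube_le (by positivity) _
  · refine Eventually.of_forall fun n => fun y hy => ?_
    obtain ⟨z, hz, hyz⟩ := APT_cover hM2 x₀ n hy.1 hy.2
    exact Set.mem_iUnion.2 ⟨⟨z, hz⟩, hyz⟩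

lemma AP_numeric (hd : 0 < d) {k N M : ℕ} (hM : M = k * N) (hk : 2 ≤ k) (hN0 : 0 < N)
    {s' : ℝ} (hs' : (d : ℝ) + Real.log (1 - 1 / (k : ℝ)) / Real.log M < s') :
    (((M - N) * M ^ (d - 1) : ℕ) : ℝ) * ((M : ℝ)⁻¹) ^ s' < 1 := by
  have hM2 : 2 ≤ M := by
    calc 2 = 2 * 1 := (mul_one 2).symm
      _ ≤ k * N := Nat.mul_le_mul hk hN0
      _ = M := hM.symm
  have hMR : (1 : ℝ) < (M : ℝ) := by exact_mod_cast hM2.trans_lt' one_lt_two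
  have hM0 : (0 : ℝ) < M := by linarith
  have hlogM : 0 < Real.log M := Real.log_pos hMR
  have hk0 : (0 : ℝ) < k := by positivity
  have hkfrac : 0 < 1 - 1 / (k : ℝ) := by
    rw [sub_pos, div_lt_one hk0]
    exact_mod_cast hk.trans_lt' one_lt_two
  have hNM : N ≤ M := by
    rw [hM]
    calc N = 1 * N := (one_mul N).symm
      _ ≤ k * N := Nat.mul_le_mul_right N (by omega)
  -- the real value of the combinatorial count
  have hmval : (((M - N) * M ^ (d - 1) : ℕ) : ℝ) = (1 - 1 / (k : ℝ)) * (M : ℝ) ^ d := by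
    have h1 : ((M - N : ℕ) : ℝ) = (M : ℝ) - N := by
      rw [Nat.cast_sub hNM]
    push_cast [h1]
    have hMeq : (M : ℝ) = (k : ℝ) * N := by exact_mod_cast hM
    have hdsplit : (M : ℝ) ^ d = (M : ℝ) ^ (d - 1) * M := by
      rw [← pow_succ]
      congr 1
      omega
    rw [hdsplit, hMeq]
    field_simp
  have hm0 : (0 : ℝ) < (((M - N) * M ^ (d - 1) : ℕ) : ℝ) := by
    rw [hmval]; positivity
  set A : ℝ := (((M - N) * M ^ (d - 1) : ℕ) : ℝ) * ((M : ℝ)⁻¹) ^ s' with hA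
  have hA0 : 0 < A := by
    rw [hA]
    have : (0:ℝ) < ((M : ℝ)⁻¹) ^ s' := Real.rpow_pos_of_pos (by positivity) s'
    positivity
  rw [← Real.exp_log hA0, ← Real.exp_zero]
  apply Real.exp_lt_exp.2
  have hlogA : Real.log A = Real.log (1 - 1 / (k : ℝ)) + d * Real.log M - s' * Real.log M := by
    rw [hA, Real.log_mul hm0.ne' (Real.rpow_pos_of_pos (by positivity) s').ne', hmval,
      Real.log_mul hkfrac.ne' (by positivity), Real.log_pow,
      Real.log_rpow (by positivity), Real.log_inv]
    ring
  rw [hlogA]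
  have := (div_lt_iff₀ hlogM).1 ((lt_sub_iff_add_lt'.2 hs'))
  nlinarith [this]

end AP13aux

theorem stmt_13 (d : ℕ) (hd : 1 ≤ d) (k : ℕ) (hk : 2 ≤ k)
    (ε : ℝ) (hε1 : 0 < ε) (hε2 : ε < 1 / Real.sqrt d)
    (F : Set (EuclideanSpace ℝ (Fin d)))
    (hF : dimH F > ENNReal.ofReal
      ((d : ℝ) + Real.log (1 - 1 / (k : ℝ)) /
        Real.log (k * ⌈Real.sqrt d / (2 * ε)⌉₊))) :
    ∀ e : EuclideanSpace ℝ (Fin d), ‖e‖ = 1 → ContainsKAPdir F k ε e := by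
  intro e he
  by_contra hnoAP
  have hd0 : 0 < d := hd
  set j0 : Fin d := ⟨0, hd0⟩ with hj0
  have hsd : (0 : ℝ) < Real.sqrt d := Real.sqrt_pos.2 (by exact_mod_cast hd0)
  set N : ℕ := ⌈Real.sqrt d / (2 * ε)⌉₊ with hNdef
  have hN0 : 0 < N := Nat.ceil_pos.2 (by positivity)
  have hN : Real.sqrt d ≤ 2 * ε * N := by
    have h1 : Real.sqrt d / (2 * ε) ≤ N := Nat.le_ceil _
    calc Real.sqrt d = (Real.sqrt d / (2 * ε)) * (2 * ε) := by field_simp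
      _ ≤ (N : ℝ) * (2 * ε) := by
          apply mul_le_mul_of_nonneg_right h1 (by positivity)
      _ = 2 * ε * N := by ring
  set M : ℕ := k * N with hMdef
  -- the isometry sending the standard basis vector to e
  have hcard : Module.finrank ℝ (EuclideanSpace ℝ (Fin d)) = Fintype.card (Fin d) := by
    simp [finrank_euclideanSpace]
  have horth : Orthonormal ℝ (Set.restrict {j0} (fun _ : Fin d => e)) := by
    rw [orthonormal_iff_ite]
    rintro ⟨i, hi⟩ ⟨j, hj⟩
    simp only [Set.mem_singleton_iff] at hi hj
    have : (⟨i, hi⟩ : ({j0} : Set (Fin d))) = ⟨j, hj⟩ := by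
      exact Subtype.ext (hi.trans hj.symm)
    rw [if_pos this]
    change inner ℝ e e = 1
    rw [real_inner_self_eq_norm_sq, he]
    norm_num
  obtain ⟨b, hb⟩ := horth.exists_orthonormalBasis_extension_of_card_eq hcard
  have hbe : b j0 = e := hb j0 rfl
  set L := b.repr.symm with hL
  have hLe : L (EuclideanSpace.single j0 1) = e := by
    rw [hL, OrthonormalBasis.repr_symm_single, hbe]
  set F' : Set (EuclideanSpace ℝ (Fin d)) := ⇑L ⁻¹' F with hF'def
  have hnoAP' : ¬ ContainsKAPdir F' k ε (EuclideanSpace.single j0 1) := by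
    intro hap
    apply hnoAP
    obtain ⟨t, Δ, hΔ, hAP⟩ := hap
    refine ⟨L t, Δ, hΔ, fun i hi => ?_⟩
    obtain ⟨y, hyF', hny⟩ := hAP i hi
    refine ⟨L y, hyF', ?_⟩
    have : L t + ((i : ℝ) * Δ) • e - L y = L (t + ((i : ℝ) * Δ) • EuclideanSpace.single j0 1 - y) := by
      rw [map_sub, map_add, LinearIsometryEquiv.map_smul, hLe]
    rw [this, LinearIsometryEquiv.norm_map]
    exact hny
  have hdim' : dimH F' = dimH F := by
    have h1 : dimH (⇑L '' F') = dimH F' := L.isometry.dimH_image F'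
    rw [hF'def, Set.image_preimage_eq F L.surjective] at h1
    exact h1.symm
  rw [← hdim'] at hF
  obtain ⟨r, hr1, hr2⟩ := ENNReal.lt_iff_exists_nnreal_btwn.1 hF
  -- the real exponent is above the critical one
  have hrgt : (d : ℝ) + Real.log (1 - 1 / (k : ℝ)) / Real.log M < (r : ℝ) := by
    have hMcast : ((M : ℕ) : ℝ) = (k : ℝ) * (⌈Real.sqrt d / (2 * ε)⌉₊ : ℝ) := by
      rw [hMdef]; push_cast; rw [hNdef]
    rw [hMcast]
    by_cases hsign : 0 ≤ (d : ℝ) + Real.log (1 - 1 / (k : ℝ)) /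
        Real.log ((k : ℝ) * (⌈Real.sqrt d / (2 * ε)⌉₊ : ℝ))
    · have := (ENNReal.ofReal_lt_ofReal_iff_of_nonneg hsign).1
        (by rw [ENNReal.ofReal_coe_nnreal] at *; exact hr1)
      exact this
    · push_neg at hsign
      calc _ < (0 : ℝ) := hsign
        _ ≤ (r : ℝ) := r.coe_nonneg
  -- Hausdorff measure of F' vanishes at exponent r
  have hzero : μH[(r : ℝ)] F' = 0 := by
    have hsub : F' ⊆ ⋃ x₀ : Fin d → ℤ, (F' ∩ APcube 1 x₀) := by
      intro y hy
      refine Set.mem_iUnion.2 ⟨fun j => ⌊y j⌋, hy, ?_⟩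
      rw [mem_APcube one_pos]
      intro j
      rw [div_one]
    refine measure_mono_null hsub (measure_iUnion_null fun x₀ => ?_)
    exact APmeasure_zero hd0 hMdef hk hN0 hε1 hN hnoAP' r.coe_nonneg
      (AP_numeric hd0 hMdef hk hN0 hrgt) x₀
  have htop : μH[(r : ℝ)] F' = ⊤ := hausdorffMeasure_of_lt_dimH hr2
  rw [hzero] at htop
  exact ENNReal.zero_ne_top htop
end

section
/- Fix an integer k ≥ 3 and a real ε with 0 < ε < 1 and ε < (k−2)/4. For each positive integer N, let r_k(ε,N) denote the largest cardinality of a set A ⊆ {1, 2, …, N} which does not contain any (k,ε)-AP. Then limsup_{N→∞} log r_k(ε,N) / log N ≥ log 2 / log((2k − 2 − 4ε)/(k − 2 − 4ε)). -/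
/-- `b 0, …, b (k-1)` is a `(k, ε)`-AP. -/
def IsKAP (k : ℕ) (ε : ℝ) (b : ℕ → ℝ) : Prop :=
  ∃ a Δ : ℝ, 0 < Δ ∧ ∀ i < k, |b i - (a + i * Δ)| ≤ ε * Δ

/-- A set `F ⊆ ℝ` contains a `(k, ε)`-AP. -/
def ContainsKAP (F : Set ℝ) (k : ℕ) (ε : ℝ) : Prop :=
  ∃ b : ℕ → ℝ, (∀ i < k, b i ∈ F) ∧ IsKAP k ε b

/-- `rk k ε N` is the largest cardinality of a subset `A ⊆ {1, …, N}` which does not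
contain any `(k, ε)`-AP. -/
noncomputable def rk (k : ℕ) (ε : ℝ) (N : ℕ) : ℕ :=
  sSup {n : ℕ | ∃ A : Finset ℕ, A.card = n ∧ A ⊆ Finset.Icc 1 N ∧
    ¬ ContainsKAP ((Nat.cast : ℕ → ℝ) '' (A : Set ℕ)) k ε}

noncomputable def cseq (C q : ℝ) (j : ℕ) : ℕ := ⌈C * q ^ j⌉₊
noncomputable def Tn (C q : ℝ) (n : ℕ) : ℕ := ∑ j ∈ Finset.range n, cseq C q j
noncomputable def Afin (C q : ℝ) (n : ℕ) : Finset ℕ :=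
  (Finset.range n).powerset.image (fun s => ∑ j ∈ s, cseq C q j)

lemma cseq_lower {C q : ℝ} (j : ℕ) : C * q ^ j ≤ (cseq C q j : ℝ) := Nat.le_ceil _

lemma cseq_upper {C q : ℝ} (hC : 0 ≤ C) (hq : 0 ≤ q) (j : ℕ) :
    (cseq C q j : ℝ) ≤ C * q ^ j + 1 :=
  (Nat.ceil_lt_add_one (by positivity)).le

lemma one_le_cseq {C q : ℝ} (hC : 1 ≤ C) (hq : 1 ≤ q) (j : ℕ) : 1 ≤ cseq C q j := by
  rw [cseq, Nat.one_le_ceil_iff]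
  nlinarith [one_le_pow₀ hq (n := j)]

lemma Tn_upper {C q : ℝ} (hC : 0 ≤ C) (hq1 : 1 < q) (n : ℕ) :
    (Tn C q n : ℝ) ≤ C * (q ^ n - 1) / (q - 1) + n := by
  have hq0 : (0:ℝ) ≤ q := by linarith
  have : (Tn C q n : ℝ) = ∑ j ∈ Finset.range n, (cseq C q j : ℝ) := by
    simp [Tn]
  rw [this]
  have h1 : ∑ j ∈ Finset.range n, (cseq C q j : ℝ) ≤
      ∑ j ∈ Finset.range n, (C * q ^ j + 1) :=
    Finset.sum_le_sum fun j _ => cseq_upper hC hq0 j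
  have h2 : ∑ j ∈ Finset.range n, (C * q ^ j + 1)
      = C * ((q ^ n - 1) / (q - 1)) + n := by
    rw [Finset.sum_add_distrib, ← Finset.mul_sum, geom_sum_eq (ne_of_gt hq1)]
    simp
  rw [h2] at h1
  rw [mul_div_assoc]
  linarith [h1]

lemma key_ineq {k : ℕ} {ε q C : ℝ} (hk : 3 ≤ k) (hε1 : 0 < ε)
    (hε3 : ε < ((k : ℝ) - 2) / 4)
    (hq : (2 * (k : ℝ) - 2 - 4 * ε) / ((k : ℝ) - 2 - 4 * ε) < q)
    (hC : max 1 (2 * (k : ℝ) * (q - 1) / ((q - 1) * ((k : ℝ) - 2 - 4 * ε) - k)) ≤ C)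
    (n : ℕ) :
    (k : ℝ) * (Tn C q n) < ((k : ℝ) - 2 - 4 * ε) * (cseq C q n) := by
  have hK : (3 : ℝ) ≤ (k : ℝ) := by exact_mod_cast hk
  set K := (k : ℝ)
  have hα : 0 < K - 2 - 4 * ε := by linarith
  have hD2 : 2 < (2 * K - 2 - 4 * ε) / (K - 2 - 4 * ε) := by
    rw [lt_div_iff₀ hα]; linarith
  have hq2 : 2 < q := lt_trans hD2 hq
  have hq1 : 1 < q := by linarith
  have hδ : 0 < (q - 1) * (K - 2 - 4 * ε) - K := by
    rw [div_lt_iff₀ hα] at hq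
    nlinarith
  have hC1 : 1 ≤ C := le_trans (le_max_left _ _) hC
  have hC0 : 0 < C := by linarith
  have hC2 : 2 * K * (q - 1) ≤ C * ((q - 1) * (K - 2 - 4 * ε) - K) := by
    have := le_trans (le_max_right _ _) hC
    rw [div_le_iff₀ hδ] at this
    linarith
  have h1 := Tn_upper (le_of_lt hC0) hq1 n
  have h2 := cseq_lower (C := C) (q := q) n
  have h3 : (n : ℝ) < 2 ^ n := by exact_mod_cast (Nat.lt_two_pow_self (n := n))
  have h4 : (2 : ℝ) ^ n ≤ q ^ n := pow_le_pow_left₀ (by norm_num) (by linarith) n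
  have hqn : (0:ℝ) < q ^ n := by positivity
  -- suffices to compare the bounds
  have main : K * (C * (q ^ n - 1) / (q - 1) + n) < (K - 2 - 4 * ε) * (C * q ^ n) := by
    rw [div_add' _ _ _ (by linarith : q - (1:ℝ) ≠ 0), ← mul_div_assoc, div_lt_iff₀ (by linarith : (0:ℝ) < q - 1)]
    have P1 := mul_le_mul_of_nonneg_right hC2 (le_of_lt hqn)
    have P2 : K * (q - 1) * n < K * (q - 1) * q ^ n := by
      apply mul_lt_mul_of_pos_left (lt_of_lt_of_le h3 h4)
      nlinarith
    have P3 : 0 < K * C := by nlinarith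
    have P4 : 0 < K * (q - 1) * q ^ n := by nlinarith
    nlinarith [P1, P2, P3, P4]
  have hT0 : (0:ℝ) ≤ (Tn C q n : ℝ) := Nat.cast_nonneg _
  calc K * (Tn C q n : ℝ) ≤ K * (C * (q ^ n - 1) / (q - 1) + n) := by
        apply mul_le_mul_of_nonneg_left h1 (by linarith)
    _ < (K - 2 - 4 * ε) * (C * q ^ n) := main
    _ ≤ (K - 2 - 4 * ε) * (cseq C q n) := by
        apply mul_le_mul_of_nonneg_left h2 (le_of_lt hα)

lemma Afin_zero {C q : ℝ} : Afin C q 0 = {0} := by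
  simp [Afin]

lemma mem_Afin_le {C q : ℝ} {n m : ℕ} (hm : m ∈ Afin C q n) : m ≤ Tn C q n := by
  simp only [Afin, Finset.mem_image, Finset.mem_powerset] at hm
  obtain ⟨s, hs, rfl⟩ := hm
  exact Finset.sum_le_sum_of_subset hs

lemma Afin_succ {C q : ℝ} (n : ℕ) :
    Afin C q (n + 1) = Afin C q n ∪ (Afin C q n).image (· + cseq C q n) := by
  have hnr : n ∉ Finset.range n := by simp
  rw [Afin, Finset.range_add_one, Finset.powerset_insert, Finset.image_union]
  congr 1
  rw [Finset.image_image]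
  rw [Afin, Finset.image_image]
  apply Finset.image_congr
  intro s hs
  simp only [Finset.mem_coe, Finset.mem_powerset] at hs
  have hns : n ∉ s := fun h => hnr (hs h)
  simp only [Function.comp_apply]
  rw [Finset.sum_insert hns, add_comm]

lemma card_Afin {C q : ℝ} (hT : ∀ m : ℕ, Tn C q m < cseq C q m) (n : ℕ) :
    (Afin C q n).card = 2 ^ n := by
  induction n with
  | zero => simp [Afin_zero]
  | succ n ih =>
    rw [Afin_succ, Finset.card_union_of_disjoint, ih,
      Finset.card_image_of_injective _ (add_left_injective _), ih]
    · ring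
    · rw [Finset.disjoint_left]
      intro m hm hm2
      simp only [Finset.mem_image] at hm2
      obtain ⟨m', hm', rfl⟩ := hm2
      have := mem_Afin_le hm
      have := hT n
      omega

lemma arith_contra {K e cr Tr : ℝ} (hK : 3 ≤ K) (he1 : 0 < e) (he2 : e < 1)
    (hkn : K * Tr < (K - 2 - 4 * e) * cr)
    (hfinal : (K - 1 - 2 * e) * (cr - Tr) ≤ (1 + 2 * e) * (Tr + cr)) : False := by
  nlinarith

lemma exists_adjacent {Q : ℕ → Prop} {k i₀ i₁ : ℕ} (h0 : i₀ < k) (h1 : i₁ < k)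
    (hq0 : ¬ Q i₀) (hq1 : Q i₁) : ∃ j, j + 1 < k ∧ ¬ (Q j ↔ Q (j + 1)) := by
  by_contra h
  simp only [not_exists, not_and, not_not] at h
  have claim : ∀ i, i < k → (Q i ↔ Q 0) := by
    intro i
    induction i with
    | zero => intro _; rfl
    | succ i ih =>
      intro hik
      rw [← h i hik]
      exact ih (by omega)
  exact hq0 ((claim i₀ h0).mpr ((claim i₁ h1).mp hq1))

lemma noKAP {k : ℕ} {ε q C : ℝ} (hk : 3 ≤ k) (hε1 : 0 < ε) (hε2 : ε < 1)
    (hkey : ∀ m : ℕ, (k : ℝ) * (Tn C q m) < ((k : ℝ) - 2 - 4 * ε) * (cseq C q m)) :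
    ∀ n (b : ℕ → ℝ), (∀ i < k, ∃ m ∈ Afin C q n, (m : ℝ) = b i) → ¬ IsKAP k ε b := by
  have hK : (3 : ℝ) ≤ (k : ℝ) := by exact_mod_cast hk
  have hT : ∀ m : ℕ, Tn C q m < cseq C q m := by
    intro m
    have h := hkey m
    have h2 : (k : ℝ) * (Tn C q m) < (k : ℝ) * (cseq C q m) := by
      nlinarith [Nat.cast_nonneg (α := ℝ) (cseq C q m)]
    have := lt_of_mul_lt_mul_left h2 (by linarith : (0:ℝ) ≤ (k:ℝ))
    exact_mod_cast this
  intro n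
  induction n with
  | zero =>
    rintro b hb ⟨a, Δ, hΔ, hap⟩
    have hb0 : b 0 = 0 := by
      obtain ⟨m, hm, hbm⟩ := hb 0 (by omega)
      rw [Afin_zero] at hm
      simp only [Finset.mem_singleton] at hm
      subst hm; simpa using hbm.symm
    have hb2 : b 2 = 0 := by
      obtain ⟨m, hm, hbm⟩ := hb 2 (by omega)
      rw [Afin_zero] at hm
      simp only [Finset.mem_singleton] at hm
      subst hm; simpa using hbm.symm
    have h0 := hap 0 (by omega)
    have h2 := hap 2 (by omega)
    rw [hb0] at h0; rw [hb2] at h2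
    rw [abs_le] at h0 h2
    push_cast at h0 h2
    nlinarith [h0.1, h0.2, h2.1, h2.2]
  | succ n ih =>
    rintro b hb ⟨a, Δ, hΔ, hap⟩
    set c := cseq C q n with hc
    set T := Tn C q n with hTd
    have hcT : (T : ℝ) < c := by exact_mod_cast hT n
    have dich : ∀ i < k, (∃ m ∈ Afin C q n, (m : ℝ) = b i) ∨
        (∃ m ∈ Afin C q n, (m : ℝ) + c = b i) := by
      intro i hi
      obtain ⟨m, hm, hbm⟩ := hb i hi
      rw [Afin_succ, Finset.mem_union] at hm
      rcases hm with hm | hm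
      · exact Or.inl ⟨m, hm, hbm⟩
      · simp only [Finset.mem_image] at hm
        obtain ⟨m', hm', rfl⟩ := hm
        refine Or.inr ⟨m', hm', ?_⟩
        push_cast at hbm ⊢
        linarith [hbm]
    set Q : ℕ → Prop := fun i => (c : ℝ) ≤ b i with hQ
    have f1 : ∀ i < k, ¬ Q i → ∃ m ∈ Afin C q n, (m : ℝ) = b i := by
      intro i hi hqi
      rcases dich i hi with h | ⟨m, hm, hbm⟩
      · exact h
      · exfalso
        apply hqi
        have h0m : (0:ℝ) ≤ (m:ℝ) := Nat.cast_nonneg _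
        show (c : ℝ) ≤ b i
        linarith
    have f2 : ∀ i < k, Q i → ∃ m ∈ Afin C q n, (m : ℝ) = b i - c := by
      intro i hi hqi
      rcases dich i hi with ⟨m, hm, hbm⟩ | ⟨m, hm, hbm⟩
      · exfalso
        have hmT : (m : ℝ) ≤ T := by exact_mod_cast mem_Afin_le hm
        have hqi' : (c : ℝ) ≤ b i := hqi
        linarith [hqi']
      · exact ⟨m, hm, by linarith [hbm]⟩
    have f3 : ∀ i < k, 0 ≤ b i ∧ b i ≤ (T : ℝ) + c := by
      intro i hi
      rcases dich i hi with ⟨m, hm, hbm⟩ | ⟨m, hm, hbm⟩ <;>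
        have hmT : (m : ℝ) ≤ T := by exact_mod_cast mem_Afin_le hm
      · constructor
        · rw [← hbm]; positivity
        · rw [← hbm]; have : (0:ℝ) ≤ c := Nat.cast_nonneg _; linarith
      · constructor
        · rw [← hbm]; positivity
        · rw [← hbm]; linarith
    have f4 : ∀ i < k, ¬ Q i → b i ≤ (T : ℝ) := by
      intro i hi hqi
      obtain ⟨m, hm, hbm⟩ := f1 i hi hqi
      have hmT : (m : ℝ) ≤ T := by exact_mod_cast mem_Afin_le hm
      linarith
    by_cases hall : ∀ i < k, ¬ Q i
    · exact ih b (fun i hi => f1 i hi (hall i hi)) ⟨a, Δ, hΔ, hap⟩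
    push_neg at hall
    obtain ⟨i₁, hi₁, hq1⟩ := hall
    by_cases hall2 : ∀ i < k, Q i
    · apply ih (fun i => b i - c) (fun i hi => f2 i hi (hall2 i hi))
      refine ⟨a - c, Δ, hΔ, fun i hi => ?_⟩
      have := hap i hi
      have heq : b i - ↑c - (a - ↑c + ↑i * Δ) = b i - (a + ↑i * Δ) := by ring
      rw [heq]
      exact this
    push_neg at hall2
    obtain ⟨i₀, hi₀, hq0⟩ := hall2
    obtain ⟨j, hjk, hne⟩ := exists_adjacent hi₀ hi₁ hq0 hq1
    have hjk' : j < k := by omega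
    have hapj := hap j hjk'
    have hapj1 := hap (j + 1) hjk
    rw [abs_le] at hapj hapj1
    push_cast at hapj1
    -- gap bound
    have hgap : (c : ℝ) - T ≤ (1 + 2 * ε) * Δ := by
      rcases Classical.em (Q j) with hQj | hQj
      · have hQj1 : ¬ Q (j + 1) := fun h => hne ⟨fun _ => h, fun _ => hQj⟩
        have h1 : (c : ℝ) ≤ b j := hQj
        have h2 : b (j + 1) ≤ T := f4 _ hjk hQj1
        nlinarith [hapj.2, hapj1.1, hΔ, hε1]
      · have hQj1 : Q (j + 1) := by
          by_contra h
          exact hne ⟨fun hq => absurd hq hQj, fun hq => absurd hq h⟩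
        have h1 : (c : ℝ) ≤ b (j + 1) := hQj1
        have h2 : b j ≤ T := f4 _ hjk' hQj
        nlinarith [hapj.1, hapj1.2, hΔ, hε1]
    -- span bound
    have hap0 := hap 0 (by omega)
    have hapk := hap (k - 1) (by omega)
    rw [abs_le] at hap0 hapk
    have hcast : ((k - 1 : ℕ) : ℝ) = (k : ℝ) - 1 := by
      rw [Nat.cast_sub (by omega), Nat.cast_one]
    rw [hcast] at hapk
    have hb0 := (f3 0 (by omega)).1
    have hbk := (f3 (k - 1) (by omega)).2
    have hspan : ((k : ℝ) - 1 - 2 * ε) * Δ ≤ (T : ℝ) + c := by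
      push_cast at hap0
      nlinarith [hap0.2, hapk.1]
    have hkn := hkey n
    have hfinal : ((k:ℝ) - 1 - 2 * ε) * ((c:ℝ) - T) ≤ (1 + 2 * ε) * ((T:ℝ) + c) := by
      calc ((k:ℝ) - 1 - 2 * ε) * ((c:ℝ) - T)
          ≤ ((k:ℝ) - 1 - 2 * ε) * ((1 + 2 * ε) * Δ) :=
            mul_le_mul_of_nonneg_left hgap (by linarith : (0:ℝ) ≤ (k:ℝ) - 1 - 2 * ε)
        _ = (1 + 2 * ε) * (((k:ℝ) - 1 - 2 * ε) * Δ) := by ring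
        _ ≤ (1 + 2 * ε) * ((T:ℝ) + c) :=
            mul_le_mul_of_nonneg_left hspan (by linarith : (0:ℝ) ≤ 1 + 2 * ε)
    exact arith_contra hK hε1 hε2 hkn hfinal

lemma rk_le_self {k : ℕ} (hk : 3 ≤ k) (ε : ℝ) (N : ℕ) : rk k ε N ≤ N := by
  apply csSup_le
  · refine ⟨0, ⟨∅, by simp, by simp, ?_⟩⟩
    rintro ⟨b, hbmem, -⟩
    have := hbmem 0 (by omega)
    simp at this
  · rintro m ⟨A, hcard, hsub, -⟩
    calc m = A.card := hcard.symm
      _ ≤ (Finset.Icc 1 N).card := Finset.card_le_card hsub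
      _ = N := by rw [Nat.card_Icc]; omega

lemma rk_lower {k : ℕ} {ε q C : ℝ} (hk : 3 ≤ k) (hε1 : 0 < ε) (hε2 : ε < 1)
    (hkey : ∀ m : ℕ, (k : ℝ) * (Tn C q m) < ((k : ℝ) - 2 - 4 * ε) * (cseq C q m))
    (n : ℕ) : 2 ^ n ≤ rk k ε (Tn C q n + 1) := by
  have hT : ∀ m : ℕ, Tn C q m < cseq C q m := by
    intro m
    have hK : (3 : ℝ) ≤ (k : ℝ) := by exact_mod_cast hk
    have h := hkey m
    have h2 : (k : ℝ) * (Tn C q m) < (k : ℝ) * (cseq C q m) := by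
      nlinarith [Nat.cast_nonneg (α := ℝ) (cseq C q m)]
    have := lt_of_mul_lt_mul_left h2 (by linarith : (0:ℝ) ≤ (k:ℝ))
    exact_mod_cast this
  apply le_csSup
  · refine ⟨Tn C q n + 1, ?_⟩
    rintro m ⟨A, hcard, hsub, -⟩
    calc m = A.card := hcard.symm
      _ ≤ (Finset.Icc 1 (Tn C q n + 1)).card := Finset.card_le_card hsub
      _ = Tn C q n + 1 := by rw [Nat.card_Icc]; omega
  · refine ⟨(Afin C q n).image (· + 1), ?_, ?_, ?_⟩
    · rw [Finset.card_image_of_injective _ (add_left_injective 1), card_Afin hT]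
    · intro m hm
      simp only [Finset.mem_image] at hm
      obtain ⟨m', hm', rfl⟩ := hm
      have := mem_Afin_le hm'
      simp only [Finset.mem_Icc]
      omega
    · rintro ⟨b, hbmem, a, Δ, hΔ, hap⟩
      apply noKAP hk hε1 hε2 hkey n (fun i => b i - 1)
      · intro i hi
        obtain ⟨x, hx, hbx⟩ := hbmem i hi
        rw [Finset.mem_coe, Finset.mem_image] at hx
        obtain ⟨mm, hmm, rfl⟩ := hx
        refine ⟨mm, hmm, ?_⟩
        push_cast at hbx
        linarith [hbx]
      · refine ⟨a - 1, Δ, hΔ, fun i hi => ?_⟩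
        have := hap i hi
        have heq : b i - 1 - (a - 1 + ↑i * Δ) = b i - (a + ↑i * Δ) := by ring
        rw [heq]
        exact this

lemma u_le_one {k : ℕ} (hk : 3 ≤ k) (ε : ℝ) (N : ℕ) :
    Real.log (rk k ε N) / Real.log N ≤ 1 := by
  rcases (Real.log_natCast_nonneg N).eq_or_lt with hN | hN
  · rw [← hN, div_zero]; norm_num
  · rw [div_le_one hN]
    rcases Nat.eq_zero_or_pos (rk k ε N) with h0 | hpos
    · rw [h0]
      simpa using le_of_lt hN
    · rw [Real.log_le_log_iff (by exact_mod_cast hpos) (by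
        have : 0 < N := lt_of_lt_of_le hpos (rk_le_self hk ε N)
        exact_mod_cast this)]
      exact_mod_cast rk_le_self hk ε N

lemma Tn_ge {C q : ℝ} (hC : 1 ≤ C) (hq : 1 ≤ q) (n : ℕ) : n ≤ Tn C q n := by
  calc n = ∑ _j ∈ Finset.range n, 1 := by simp
    _ ≤ ∑ j ∈ Finset.range n, cseq C q j := by
        apply Finset.sum_le_sum
        intro j _
        exact one_le_cseq hC hq j
    _ = Tn C q n := rfl

theorem stmt_14 (k : ℕ) (hk : 3 ≤ k) (ε : ℝ) (hε1 : 0 < ε) (hε2 : ε < 1)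
    (hε3 : ε < ((k : ℝ) - 2) / 4) :
    Filter.limsup (fun N : ℕ => Real.log (rk k ε N) / Real.log N) Filter.atTop ≥
      Real.log 2 / Real.log ((2 * (k : ℝ) - 2 - 4 * ε) / ((k : ℝ) - 2 - 4 * ε)) := by
  have hK : (3 : ℝ) ≤ (k : ℝ) := by exact_mod_cast hk
  have hα : 0 < (k : ℝ) - 2 - 4 * ε := by linarith
  set D : ℝ := (2 * (k : ℝ) - 2 - 4 * ε) / ((k : ℝ) - 2 - 4 * ε) with hD
  have hD2 : 2 < D := by rw [hD, lt_div_iff₀ hα]; linarith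
  have hlogD : 0 < Real.log D := Real.log_pos (by linarith)
  set c₀ : ℝ := Real.log 2 / Real.log D with hc₀
  have hc₀pos : 0 < c₀ := div_pos (Real.log_pos one_lt_two) hlogD
  have hc₀lt1 : c₀ < 1 := by
    rw [hc₀, div_lt_one hlogD]
    exact Real.log_lt_log two_pos hD2
  rw [ge_iff_le]
  apply le_of_forall_lt_imp_le_of_dense
  intro x hx
  -- replace x by x' ∈ (0, c₀)
  set x' : ℝ := max x (c₀ / 2) with hx'
  have hx'pos : 0 < x' := lt_of_lt_of_le (by linarith) (le_max_right _ _)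
  have hx'lt : x' < c₀ := max_lt hx (by linarith)
  have hxx' : x ≤ x' := le_max_left _ _
  suffices h : x' ≤ Filter.limsup (fun N : ℕ => Real.log (rk k ε N) / Real.log N)
      Filter.atTop by linarith
  -- choose q
  set y : ℝ := (x' + c₀) / 2 with hy
  have hy1 : x' < y := by rw [hy]; linarith
  have hy2 : y < c₀ := by rw [hy]; linarith
  have hypos : 0 < y := by linarith
  set q : ℝ := Real.exp (Real.log 2 / y) with hq
  have hlogq : Real.log q = Real.log 2 / y := Real.log_exp _
  have hqD : D < q := by
    have h1 : Real.log D < Real.log 2 / y := by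
      rw [lt_div_iff₀ hypos]
      have : y * Real.log D < c₀ * Real.log D := by
        exact mul_lt_mul_of_pos_right hy2 hlogD
      rw [hc₀, div_mul_cancel₀ _ (ne_of_gt hlogD)] at this
      linarith [this]
    calc D = Real.exp (Real.log D) := (Real.exp_log (by linarith)).symm
      _ < Real.exp (Real.log 2 / y) := Real.exp_lt_exp.mpr h1
  have hq2 : 2 < q := lt_trans hD2 hqD
  have hlogqpos : 0 < Real.log q := Real.log_pos (by linarith)
  -- choose C
  set C : ℝ := max 1 (2 * (k : ℝ) * (q - 1) / ((q - 1) * ((k : ℝ) - 2 - 4 * ε) - k)) with hC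
  have hkey := key_ineq hk hε1 hε3 hqD (le_refl C)
  have hC1 : (1 : ℝ) ≤ C := le_max_left _ _
  have hC0 : (0 : ℝ) < C := by linarith
  -- B bound
  set B : ℝ := C / (q - 1) + 2 with hB
  have hBpos : 1 < B := by
    have : 0 ≤ C / (q - 1) := div_nonneg (by linarith) (by linarith)
    rw [hB]; linarith
  have hlogB : 0 < Real.log B := Real.log_pos hBpos
  -- N bound
  have hNle : ∀ n : ℕ, ((Tn C q n + 1 : ℕ) : ℝ) ≤ B * q ^ n := by
    intro n
    have h1 := Tn_upper (C := C) (q := q) (le_of_lt hC0) (by linarith : (1:ℝ) < q) n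
    have h3 : (n : ℝ) < 2 ^ n := by exact_mod_cast (Nat.lt_two_pow_self (n := n))
    have h4 : (2 : ℝ) ^ n ≤ q ^ n := pow_le_pow_left₀ (by norm_num) (by linarith) n
    have h5 : (1 : ℝ) ≤ 2 ^ n := one_le_pow₀ (by norm_num : (1:ℝ) ≤ 2)
    have h6 : C * (q ^ n - 1) / (q - 1) ≤ C / (q - 1) * q ^ n := by
      have heq : C * (q ^ n - 1) / (q - 1) = C / (q - 1) * (q ^ n - 1) := by ring
      rw [heq]
      apply mul_le_mul_of_nonneg_left (by linarith : q ^ n - 1 ≤ q ^ n)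
      exact div_nonneg (by linarith) (by linarith)
    push_cast
    rw [hB]
    nlinarith [h1, h6]
  -- the frequent bound
  have hfreq : ∃ᶠ N in Filter.atTop,
      x' ≤ Real.log (rk k ε N) / Real.log N := by
    rw [Filter.frequently_atTop]
    intro M
    have hden : 0 < Real.log 2 - x' * Real.log q := by
      rw [hlogq]
      have h1 : x' * (Real.log 2 / y) < y * (Real.log 2 / y) :=
        mul_lt_mul_of_pos_right hy1 (by positivity)
      rw [mul_div_cancel₀ _ (ne_of_gt hypos)] at h1
      linarith
    set n : ℕ := max (max M 1) ⌈x' * Real.log B / (Real.log 2 - x' * Real.log q)⌉₊ with hn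
    have hn1 : 1 ≤ n := le_trans (le_max_right M 1) (le_max_left _ _)
    have hnM : M ≤ n := le_trans (le_max_left M 1) (le_max_left _ _)
    have hnc : x' * Real.log B / (Real.log 2 - x' * Real.log q) ≤ n := by
      calc x' * Real.log B / (Real.log 2 - x' * Real.log q)
          ≤ (⌈x' * Real.log B / (Real.log 2 - x' * Real.log q)⌉₊ : ℝ) := Nat.le_ceil _
        _ ≤ n := by exact_mod_cast le_max_right (max M 1) _
    refine ⟨Tn C q n + 1, ?_, ?_⟩
    · have := Tn_ge hC1 (by linarith : (1:ℝ) ≤ q) n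
      omega
    · -- main estimate
      set N : ℕ := Tn C q n + 1 with hN
      have hNn : n + 1 ≤ N := by
        have := Tn_ge hC1 (by linarith : (1:ℝ) ≤ q) n
        omega
      have hN2 : 2 ≤ N := by omega
      have hlogN : 0 < Real.log N :=
        Real.log_pos (by exact_mod_cast lt_of_lt_of_le one_lt_two hN2)
      have hrk : (2 : ℕ) ^ n ≤ rk k ε N := rk_lower hk hε1 hε2 hkey n
      have hrkpos : 0 < rk k ε N := lt_of_lt_of_le (pow_pos two_pos n) hrk
      have hlogrk : (n : ℝ) * Real.log 2 ≤ Real.log (rk k ε N) := by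
        have h2 : Real.log ((2:ℝ) ^ n) ≤ Real.log (rk k ε N) := by
          rw [Real.log_le_log_iff (by positivity) (by exact_mod_cast hrkpos)]
          exact_mod_cast hrk
        rwa [Real.log_pow] at h2
      have hlogNle : Real.log N ≤ Real.log B + n * Real.log q := by
        have h1 : Real.log (N : ℝ) ≤ Real.log (B * q ^ n) := by
          rw [Real.log_le_log_iff (by exact_mod_cast Nat.lt_of_lt_of_le Nat.zero_lt_two hN2)
            (by positivity)]
          exact hNle n
        rwa [Real.log_mul (by positivity) (by positivity), Real.log_pow] at h1
      have hdenN : 0 < Real.log B + n * Real.log q := lt_of_lt_of_le hlogN hlogNle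
      -- x' * (log B + n log q) ≤ n * log 2
      have hx'bound : x' * (Real.log B + n * Real.log q) ≤ (n : ℝ) * Real.log 2 := by
        rw [div_le_iff₀ hden] at hnc
        linarith [hnc]
      calc x' ≤ (n : ℝ) * Real.log 2 / (Real.log B + n * Real.log q) := by
            rw [le_div_iff₀ hdenN]; linarith [hx'bound]
        _ ≤ (n : ℝ) * Real.log 2 / Real.log N := by
            apply div_le_div_of_nonneg_left _ hlogN hlogNle
            positivity
        _ ≤ Real.log (rk k ε N) / Real.log N := by
            gcongr
  exact Filter.le_limsup_of_frequently_le hfreq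
    (Filter.isBoundedUnder_of ⟨1, fun N => u_le_one hk ε N⟩)
end
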